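/- Let G be an infinite connected simple graph with finite vertex degrees, with a distinguished root vertex o, and let 0 < q < i(G), where i(G) is the anchored expansion constant of G. Then every q-island of G has only finitely many vertices, and every q-island of G is itself a q-isolated core of G. -/

import Mathlib

open SimpleGraph

variable {V : Type*}

/-- The edge boundary `∂S` of a vertex set `S`: the set of edges of `G` with one endpoint
in `S` and the other endpoint outside `S`. -/
def edgeBdry (G : SimpleGraph V) (S : Set V) : Set (Sym2 V) :=
  {e | e ∈ G.edgeSet ∧ ∃ x ∈ S, ∃ y ∉ S, e = s(x, y)}

/-- The `q`-isolation `Δ_q S := q·|S| − |∂S|` of a vertex set `S`. -/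
noncomputable def isolation (G : SimpleGraph V) (q : ℝ) (S : Set V) : ℝ :=
  q * (S.ncard : ℝ) - ((edgeBdry G S).ncard : ℝ)

variable {G : SimpleGraph V} {q : ℝ} {S T X Y A C : Set V}

lemma mem_edgeBdry_iff {e : Sym2 V} :
    e ∈ edgeBdry G S ↔ ∃ x y, G.Adj x y ∧ x ∈ S ∧ y ∉ S ∧ e = s(x, y) := by
  constructor
  · rintro ⟨he, x, hx, y, hy, rfl⟩
    exact ⟨x, y, he, hx, hy, rfl⟩
  · rintro ⟨x, y, hadj, hx, hy, rfl⟩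
    exact ⟨hadj, x, hx, y, hy, rfl⟩

lemma edgeBdry_finite (hloc : ∀ v : V, (G.neighborSet v).Finite) (hS : S.Finite) :
    (edgeBdry G S).Finite := by
  have hsub : edgeBdry G S ⊆ ⋃ x ∈ S, G.incidenceSet x := by
    rintro e he
    obtain ⟨x, y, hadj, hx, hy, rfl⟩ := mem_edgeBdry_iff.mp he
    exact Set.mem_biUnion hx ⟨hadj, Sym2.mem_mk_left x y⟩
  refine Set.Finite.subset (Set.Finite.biUnion hS fun x _ => ?_) hsub
  classical
  have : (G.neighborSet x).Finite := hloc x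
  rw [← Set.finite_coe_iff] at this ⊢
  exact Finite.of_equiv _ (G.incidenceSetEquivNeighborSet x).symm

lemma edgeBdry_union_subset : edgeBdry G (S ∪ T) ⊆ edgeBdry G S ∪ edgeBdry G T := by
  rintro e he
  obtain ⟨x, y, hadj, hx, hy, rfl⟩ := mem_edgeBdry_iff.mp he
  rcases hx with hx | hx
  · exact Or.inl (mem_edgeBdry_iff.mpr ⟨x, y, hadj, hx, fun h => hy (Or.inl h), rfl⟩)
  · exact Or.inr (mem_edgeBdry_iff.mpr ⟨x, y, hadj, hx, fun h => hy (Or.inr h), rfl⟩)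

lemma edgeBdry_submod (hloc : ∀ v : V, (G.neighborSet v).Finite)
    (hS : S.Finite) (hT : T.Finite) :
    (edgeBdry G (S ∪ T)).ncard + (edgeBdry G (S ∩ T)).ncard ≤
      (edgeBdry G S).ncard + (edgeBdry G T).ncard := by
  set A := edgeBdry G (S ∪ T)
  set B := edgeBdry G (S ∩ T)
  set X := edgeBdry G S
  set Y := edgeBdry G T
  have hXf : X.Finite := edgeBdry_finite hloc hS
  have hYf : Y.Finite := edgeBdry_finite hloc hT
  have hAB : A ∪ B ⊆ X ∪ Y := by
    apply Set.union_subset edgeBdry_union_subset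
    rintro e he
    obtain ⟨x, y, hadj, hx, hy, rfl⟩ := mem_edgeBdry_iff.mp he
    by_cases hyS : y ∈ S
    · have hyT : y ∉ T := fun h => hy ⟨hyS, h⟩
      exact Or.inr (mem_edgeBdry_iff.mpr ⟨x, y, hadj, hx.2, hyT, rfl⟩)
    · exact Or.inl (mem_edgeBdry_iff.mpr ⟨x, y, hadj, hx.1, hyS, rfl⟩)
  have hI : A ∩ B ⊆ X ∩ Y := by
    rintro e ⟨heA, heB⟩
    obtain ⟨x, y, hadj, hx, hy, rfl⟩ := mem_edgeBdry_iff.mp heA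
    obtain ⟨a, b, hadj', ha, hb, heq⟩ := mem_edgeBdry_iff.mp heB
    rcases Sym2.eq_iff.mp heq with ⟨rfl, rfl⟩ | ⟨rfl, rfl⟩
    · exact ⟨mem_edgeBdry_iff.mpr ⟨x, y, hadj, ha.1, fun h => hy (Or.inl h), rfl⟩,
        mem_edgeBdry_iff.mpr ⟨x, y, hadj, ha.2, fun h => hy (Or.inr h), rfl⟩⟩
    · exact absurd (Or.inl ha.1) hy
  have hAf : A.Finite := (hXf.union hYf).subset (hAB.trans' Set.subset_union_left)
  have hBf : B.Finite := (hXf.union hYf).subset (hAB.trans' Set.subset_union_right)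
  calc A.ncard + B.ncard = (A ∪ B).ncard + (A ∩ B).ncard :=
        (Set.ncard_union_add_ncard_inter A B hAf hBf).symm
    _ ≤ (X ∪ Y).ncard + (X ∩ Y).ncard := by
        gcongr
        · exact hXf.union hYf
        · exact (hXf.inter_of_left Y)
    _ = X.ncard + Y.ncard := Set.ncard_union_add_ncard_inter X Y hXf hYf


/-- A finite vertex set `S` is a `q`-isolated core if `Δ_q S > Δ_q A` for every
proper subset `A ⊊ S`. -/
def IsIsolatedCore (G : SimpleGraph V) (q : ℝ) (S : Set V) : Prop :=
  S.Finite ∧ ∀ A : Set V, A ⊂ S → isolation G q A < isolation G q S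

lemma isolation_supermod (hloc : ∀ v : V, (G.neighborSet v).Finite)
    (hS : S.Finite) (hT : T.Finite) :
    isolation G q S + isolation G q T ≤
      isolation G q (S ∪ T) + isolation G q (S ∩ T) := by
  have hcard : (S ∪ T).ncard + (S ∩ T).ncard = S.ncard + T.ncard :=
    Set.ncard_union_add_ncard_inter S T hS hT
  have hb := edgeBdry_submod (G := G) hloc hS hT
  unfold isolation
  have hc : ((S ∪ T).ncard : ℝ) + ((S ∩ T).ncard : ℝ) = (S.ncard : ℝ) + (T.ncard : ℝ) := by
    exact_mod_cast congrArg (Nat.cast (R := ℝ)) hcard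
  have hb' : ((edgeBdry G (S ∪ T)).ncard : ℝ) + ((edgeBdry G (S ∩ T)).ncard : ℝ) ≤
      ((edgeBdry G S).ncard : ℝ) + ((edgeBdry G T).ncard : ℝ) := by exact_mod_cast hb
  have hq : q * ((S ∪ T).ncard + (S ∩ T).ncard : ℝ) = q * ((S.ncard : ℝ) + T.ncard) := by
    rw [hc]
  linarith [hq, hb', mul_add q ((S ∪ T).ncard : ℝ) ((S ∩ T).ncard : ℝ),
    mul_add q (S.ncard : ℝ) (T.ncard : ℝ)]

lemma noAdj_disjoint_bdry (hdisj : Disjoint X Y)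
    (hadj : ∀ x ∈ X, ∀ y ∈ Y, ¬ G.Adj x y) :
    edgeBdry G (X ∪ Y) = edgeBdry G X ∪ edgeBdry G Y ∧
      Disjoint (edgeBdry G X) (edgeBdry G Y) := by
  constructor
  · apply Set.Subset.antisymm edgeBdry_union_subset
    rintro e (he | he)
    · obtain ⟨x, y, ha, hx, hy, rfl⟩ := mem_edgeBdry_iff.mp he
      have hyY : y ∉ Y := fun h => hadj x hx y h ha
      exact mem_edgeBdry_iff.mpr ⟨x, y, ha, Or.inl hx, fun h => h.elim hy hyY, rfl⟩
    · obtain ⟨x, y, ha, hx, hy, rfl⟩ := mem_edgeBdry_iff.mp he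
      have hyX : y ∉ X := fun h => hadj y h x hx ha.symm
      exact mem_edgeBdry_iff.mpr ⟨x, y, ha, Or.inr hx, fun h => h.elim hyX hy, rfl⟩
  · rw [Set.disjoint_left]
    rintro e he he'
    obtain ⟨x, y, ha, hx, hy, rfl⟩ := mem_edgeBdry_iff.mp he
    obtain ⟨a, b, ha', haY, hb, heq⟩ := mem_edgeBdry_iff.mp he'
    rcases Sym2.eq_iff.mp heq with ⟨h1, h2⟩ | ⟨h1, h2⟩
    · subst h1; exact (Set.disjoint_left.mp hdisj hx) haY
    · subst h2; exact hadj x hx y haY ha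

lemma isolation_add (hloc : ∀ v : V, (G.neighborSet v).Finite)
    (hX : X.Finite) (hY : Y.Finite) (hdisj : Disjoint X Y)
    (hadj : ∀ x ∈ X, ∀ y ∈ Y, ¬ G.Adj x y) :
    isolation G q (X ∪ Y) = isolation G q X + isolation G q Y := by
  obtain ⟨heq, hd⟩ := noAdj_disjoint_bdry hdisj hadj
  unfold isolation
  rw [heq, Set.ncard_union_eq hd (edgeBdry_finite hloc hX) (edgeBdry_finite hloc hY),
    Set.ncard_union_eq hdisj hX hY]
  push_cast
  ring

lemma core_pos (hS : IsIsolatedCore G q S) (hne : S.Nonempty) :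
    0 < isolation G q S := by
  have h := hS.2 ∅ (Set.empty_ssubset.mpr hne)
  have : isolation G q ∅ = 0 := by
    have hb : edgeBdry G (∅ : Set V) = ∅ :=
      Set.eq_empty_iff_forall_notMem.mpr fun e he => by
        obtain ⟨x, y, _, hx, _⟩ := mem_edgeBdry_iff.mp he
        exact hx
    simp [isolation, hb]
  linarith [this ▸ h]

lemma core_union (hloc : ∀ v : V, (G.neighborSet v).Finite)
    (hS : IsIsolatedCore G q S) (hT : IsIsolatedCore G q T) :
    IsIsolatedCore G q (S ∪ T) := by
  obtain ⟨hSf, hScore⟩ := hS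
  obtain ⟨hTf, hTcore⟩ := hT
  refine ⟨hSf.union hTf, fun A hA => ?_⟩
  have hAf : A.Finite := (hSf.union hTf).subset hA.subset
  have h1 := isolation_supermod (G := G) (q := q) hloc hAf hSf
  have h2 := isolation_supermod (G := G) (q := q) hloc (hAf.union hSf) hTf
  have hUeq : (A ∪ S) ∪ T = S ∪ T := by
    rw [Set.union_assoc]
    exact Set.union_eq_self_of_subset_left hA.subset
  rw [hUeq] at h2
  have h3 : isolation G q (A ∩ S) ≤ isolation G q S := by
    rcases eq_or_ne (A ∩ S) S with h | h
    · rw [h]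
    · exact le_of_lt (hScore _ (Set.ssubset_iff_subset_ne.mpr ⟨Set.inter_subset_right, h⟩))
  have h4 : isolation G q ((A ∪ S) ∩ T) ≤ isolation G q T := by
    rcases eq_or_ne ((A ∪ S) ∩ T) T with h | h
    · rw [h]
    · exact le_of_lt (hTcore _ (Set.ssubset_iff_subset_ne.mpr ⟨Set.inter_subset_right, h⟩))
  have hstrict : isolation G q (A ∩ S) < isolation G q S ∨
      isolation G q ((A ∪ S) ∩ T) < isolation G q T := by
    by_contra hcon
    push_neg at hcon
    have e3 : A ∩ S = S := by
      by_contra h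
      exact absurd (hScore _ (Set.ssubset_iff_subset_ne.mpr ⟨Set.inter_subset_right, h⟩))
        (not_lt.mpr hcon.1)
    have e4 : (A ∪ S) ∩ T = T := by
      by_contra h
      exact absurd (hTcore _ (Set.ssubset_iff_subset_ne.mpr ⟨Set.inter_subset_right, h⟩))
        (not_lt.mpr hcon.2)
    have hSA : S ⊆ A := by rw [← e3]; exact Set.inter_subset_left
    have hTA : T ⊆ A ∪ S := by rw [← e4]; exact Set.inter_subset_left
    have : S ∪ T ⊆ A := by
      apply Set.union_subset hSA
      intro t ht
      rcases hTA ht with h | h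
      · exact h
      · exact hSA h
    exact absurd (Set.Subset.antisymm hA.subset this) (Set.ssubset_iff_subset_ne.mp hA).2
  rcases hstrict with h | h <;> linarith

lemma core_split (hloc : ∀ v : V, (G.neighborSet v).Finite)
    (hU : IsIsolatedCore G q (X ∪ Y)) (hdisj : Disjoint X Y)
    (hadj : ∀ x ∈ X, ∀ y ∈ Y, ¬ G.Adj x y) :
    IsIsolatedCore G q X := by
  obtain ⟨hUf, hUcore⟩ := hU
  have hXf : X.Finite := hUf.subset Set.subset_union_left
  have hYf : Y.Finite := hUf.subset Set.subset_union_right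
  refine ⟨hXf, fun A hA => ?_⟩
  have hAf : A.Finite := hXf.subset hA.subset
  have hAY : Disjoint A Y := hdisj.mono_left hA.subset
  have hAYadj : ∀ x ∈ A, ∀ y ∈ Y, ¬ G.Adj x y := fun x hx => hadj x (hA.subset hx)
  have h1 : isolation G q (A ∪ Y) = isolation G q A + isolation G q Y :=
    isolation_add hloc hAf hYf hAY hAYadj
  have h2 : isolation G q (X ∪ Y) = isolation G q X + isolation G q Y :=
    isolation_add hloc hXf hYf hdisj hadj
  have hss : A ∪ Y ⊂ X ∪ Y := by
    obtain ⟨w, hwX, hwA⟩ := Set.exists_of_ssubset hA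
    refine Set.ssubset_iff_of_subset (Set.union_subset_union_left Y hA.subset) |>.mpr ?_
    exact ⟨w, Or.inl hwX, fun h => h.elim hwA (fun hw => Set.disjoint_left.mp hdisj hwX hw)⟩
  have := hUcore _ hss
  linarith [h1 ▸ h2 ▸ this]


lemma induce_connected_iff_walks {S : Set V} :
    (G.induce S).Connected ↔ S.Nonempty ∧
      ∀ x ∈ S, ∀ y ∈ S, ∃ p : G.Walk x y, ∀ v ∈ p.support, v ∈ S := by
  rw [connected_induce_iff, Subgraph.connected_iff_forall_exists_walk_subgraph]
  constructor
  · rintro ⟨hne, hw⟩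
    refine ⟨by simpa using hne, fun x hx y hy => ?_⟩
    obtain ⟨p, hp⟩ := hw (by simpa using hx) (by simpa using hy)
    refine ⟨p, fun v hv => ?_⟩
    have : v ∈ p.toSubgraph.verts := by rw [Walk.verts_toSubgraph]; exact hv
    simpa using hp.1 this
  · rintro ⟨hne, hw⟩
    refine ⟨by simpa using hne, fun {u v} hu hv => ?_⟩
    obtain ⟨p, hp⟩ := hw u (by simpa using hu) v (by simpa using hv)
    refine ⟨p, ⟨?_, ?_⟩⟩
    · intro x hx
      rw [Walk.verts_toSubgraph] at hx
      simpa using hp x hx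
    · intro x y hxy
      have hadj : G.Adj x y := p.toSubgraph.adj_sub hxy
      have hx : x ∈ p.toSubgraph.verts := p.toSubgraph.edge_vert hxy
      have hy : y ∈ p.toSubgraph.verts := p.toSubgraph.edge_vert hxy.symm
      rw [Walk.verts_toSubgraph] at hx hy
      rw [Subgraph.induce_adj]; exact ⟨hp x hx, hp y hy, by simpa using hadj⟩

def gcomp (G : SimpleGraph V) (T : Set V) (c : V) : Set V :=
  {v | ∃ p : G.Walk c v, ∀ u ∈ p.support, u ∈ T}

lemma gcomp_subset {T : Set V} {c : V} : gcomp G T c ⊆ T := by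
  rintro v ⟨p, hp⟩
  exact hp v p.end_mem_support

lemma mem_gcomp_self {T : Set V} {c : V} (hc : c ∈ T) : c ∈ gcomp G T c :=
  ⟨Walk.nil, by simp [hc]⟩

lemma gcomp_closed {T : Set V} {c v w : V} (hv : v ∈ gcomp G T c) (hw : w ∈ T)
    (h : G.Adj v w) : w ∈ gcomp G T c := by
  obtain ⟨p, hp⟩ := hv
  refine ⟨p.concat h, fun u hu => ?_⟩
  rw [Walk.support_concat, List.mem_append] at hu
  rcases hu with hu | hu
  · exact hp u hu
  · simp only [List.mem_singleton] at hu
    exact hu ▸ hw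

lemma support_subset_gcomp {T : Set V} {c x : V} (p : G.Walk c x)
    (hp : ∀ u ∈ p.support, u ∈ T) : ∀ u ∈ p.support, u ∈ gcomp G T c := by
  classical
  intro u hu
  exact ⟨p.takeUntil u hu, fun w hw => hp w (Walk.support_takeUntil_subset p hu hw)⟩

lemma gcomp_connected {T : Set V} {c : V} (hc : c ∈ T) :
    (G.induce (gcomp G T c)).Connected := by
  rw [induce_connected_iff_walks]
  refine ⟨⟨c, mem_gcomp_self hc⟩, fun x hx y hy => ?_⟩
  obtain ⟨p, hp⟩ := hx
  obtain ⟨r, hr⟩ := hy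
  refine ⟨p.reverse.append r, fun v hv => ?_⟩
  rw [Walk.support_append, List.mem_append] at hv
  rcases hv with hv | hv
  · exact support_subset_gcomp p hp v (by rwa [Walk.support_reverse, List.mem_reverse] at hv)
  · exact support_subset_gcomp r hr v (List.mem_of_mem_tail hv)

/-- `A_q`: the union of all `q`-isolated cores of `G`. -/
def coreUnion (G : SimpleGraph V) (q : ℝ) : Set V :=
  ⋃₀ {S : Set V | IsIsolatedCore G q S}

/-- A `q`-island: a connected component of (the subgraph of `G` induced by) `A_q`,
characterised as a nonempty connected subset of `A_q` which is closed under
adjacency within `A_q`. -/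
def IsIsland (G : SimpleGraph V) (q : ℝ) (C : Set V) : Prop :=
  C ⊆ coreUnion G q ∧ (G.induce C).Connected ∧
    ∀ x ∈ C, ∀ y ∈ coreUnion G q, G.Adj x y → y ∈ C

lemma gcomp_core (hloc : ∀ v : V, (G.neighborSet v).Finite) {T : Set V} {c : V}
    (hT : IsIsolatedCore G q T) (hc : c ∈ T) : IsIsolatedCore G q (gcomp G T c) := by
  apply core_split hloc (X := gcomp G T c) (Y := T \ gcomp G T c)
  · rwa [Set.union_diff_cancel gcomp_subset]
  · exact Set.disjoint_sdiff_right.mono_left le_rfl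
  · rintro x hx y ⟨hyT, hyW⟩ hadj
    exact hyW (gcomp_closed hx hyT hadj)

lemma island_vertex_core (hloc : ∀ v : V, (G.neighborSet v).Finite)
    (hC : IsIsland G q C) {v : V} (hv : v ∈ C) :
    ∃ S : Set V, IsIsolatedCore G q S ∧ S ⊆ C ∧ v ∈ S := by
  obtain ⟨S, hScore, hvS⟩ := hC.1 hv
  have hsplit : IsIsolatedCore G q (S ∩ C) := by
    apply core_split hloc (X := S ∩ C) (Y := S \ C)
    · rwa [Set.inter_union_diff]
    · exact Set.disjoint_left.mpr fun x hx hx' => hx'.2 hx.2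
    · rintro x hx y ⟨hyS, hyC⟩ hadj
      exact hyC (hC.2.2 x hx.2 y ⟨S, hScore, hyS⟩ hadj)
  exact ⟨S ∩ C, hsplit, Set.inter_subset_right, ⟨hvS, hv⟩⟩

lemma exists_adj_outside {S W : Set V} :
    ∀ {c z : V} (p : G.Walk c z), (∀ v ∈ p.support, v ∈ S) → c ∈ W → z ∉ W →
      ∃ x y, x ∈ W ∧ y ∈ S ∧ y ∉ W ∧ G.Adj x y := by
  intro c z p
  induction p with
  | nil => intro _ hc hz; exact absurd hc hz
  | @cons c u z h q ih =>
    intro hp hc hz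
    by_cases hu : u ∈ W
    · exact ih (fun v hv => hp v (by simp [Walk.support_cons, hv])) hu hz
    · exact ⟨c, u, hc, hp u (by simp [Walk.support_cons, q.start_mem_support]), hu, h⟩

lemma island_grow (hloc : ∀ v : V, (G.neighborSet v).Finite)
    (hC : IsIsland G q C) (hCinf : C.Infinite) {c : V} (hc : c ∈ C) :
    ∀ k : ℕ, ∃ W : Set V, IsIsolatedCore G q W ∧ W ⊆ C ∧ c ∈ W ∧
      (G.induce W).Connected ∧ k ≤ W.ncard := by
  intro k
  induction k with
  | zero =>
    obtain ⟨S, hScore, hSC, hcS⟩ := island_vertex_core hloc hC hc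
    exact ⟨gcomp G S c, gcomp_core hloc hScore hcS, gcomp_subset.trans hSC,
      mem_gcomp_self hcS, gcomp_connected hcS, Nat.zero_le _⟩
  | succ k ih =>
    obtain ⟨W, hWcore, hWC, hcW, hWconn, hWcard⟩ := ih
    have hWfin : W.Finite := hWcore.1
    obtain ⟨z, hzC, hzW⟩ : ∃ z, z ∈ C ∧ z ∉ W := by
      obtain ⟨z, hz⟩ := (hCinf.diff hWfin).nonempty
      exact ⟨z, hz.1, hz.2⟩
    obtain ⟨p, hp⟩ := (induce_connected_iff_walks.mp hC.2.1).2 c hc z hzC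
    obtain ⟨x, y, hxW, hyC, hyW, hadj⟩ := exists_adj_outside p hp hcW hzW
    obtain ⟨Sy, hSycore, hSyC, hySy⟩ := island_vertex_core hloc hC hyC
    set T := W ∪ Sy with hT
    have hTcore : IsIsolatedCore G q T := core_union hloc hWcore hSycore
    have hcT : c ∈ T := Or.inl hcW
    set W' := gcomp G T c with hW'
    have hWsub : W ⊆ W' := by
      intro w hw
      obtain ⟨r, hr⟩ := (induce_connected_iff_walks.mp hWconn).2 c hcW w hw
      exact ⟨r, fun u hu => Or.inl (hr u hu)⟩
    have hyW' : y ∈ W' := gcomp_closed (hWsub hxW) (Or.inr hySy) hadj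
    have hW'fin : W'.Finite := hTcore.1.subset gcomp_subset
    refine ⟨W', gcomp_core hloc hTcore hcT,
      gcomp_subset.trans (Set.union_subset hWC hSyC), mem_gcomp_self hcT,
      gcomp_connected hcT, ?_⟩
    have hins : insert y W ⊆ W' := Set.insert_subset hyW' hWsub
    calc k + 1 ≤ W.ncard + 1 := by omega
      _ = (insert y W).ncard := (Set.ncard_insert_of_notMem hyW hWfin).symm
      _ ≤ W'.ncard := Set.ncard_le_ncard hins hW'fin

/-- The anchored expansion constant
`i(G) = lim_{n→∞} inf { |∂K|/|K| : o ∈ K ⊆ G connected, n ≤ |K| < ∞ }`;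
since the infima are nondecreasing in `n`, the limit equals the supremum over `n`. -/
noncomputable def anchoredExpansion (G : SimpleGraph V) (o : V) : ℝ :=
  ⨆ n : ℕ, sInf {r : ℝ | ∃ K : Set V, o ∈ K ∧ K.Finite ∧ (G.induce K).Connected ∧
    n ≤ K.ncard ∧ r = ((edgeBdry G K).ncard : ℝ) / (K.ncard : ℝ)}

/-- The set of children of a vertex `x` in the tree rooted at `o`: the neighbours of `x`
at larger graph distance from the root. -/
def children (G : SimpleGraph V) (o x : V) : Set V :=
  {y | G.Adj x y ∧ G.dist o y = G.dist o x + 1}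

lemma core_finsetBiUnion {ι : Type*} (hloc : ∀ v : V, (G.neighborSet v).Finite)
    (s : Finset ι) (hs : s.Nonempty) (f : ι → Set V)
    (hf : ∀ i ∈ s, IsIsolatedCore G q (f i)) :
    IsIsolatedCore G q (⋃ i ∈ s, f i) := by
  classical
  induction hs using Finset.Nonempty.cons_induction with
  | singleton a => simpa using hf a (Finset.mem_singleton_self a)
  | cons a s ha hs ih =>
    have heq : (⋃ i ∈ Finset.cons a s ha, f i) = f a ∪ ⋃ i ∈ s, f i := by
      simp [Finset.cons_eq_insert, Set.biUnion_insert]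
    rw [heq]
    exact core_union hloc (hf a (Finset.mem_cons_self a s))
      (ih fun i hi => hf i (Finset.mem_cons_of_mem hi))


/-- Let `G` be an infinite connected simple graph with finite vertex degrees, with a
distinguished root vertex `o`, and let `0 < q < i(G)`, where `i(G)` is the anchored
expansion constant of `G`. Then every `q`-island of `G` has only finitely many vertices,
and every `q`-island of `G` is itself a `q`-isolated core of `G`. -/
theorem stmt5 (G : SimpleGraph V) [Infinite V] (hconn : G.Connected)
    (hloc : ∀ v : V, (G.neighborSet v).Finite) (o : V) (q : ℝ)
    (hq0 : 0 < q) (hq : q < anchoredExpansion G o) :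
    ∀ C : Set V, IsIsland G q C → C.Finite ∧ IsIsolatedCore G q C := by
  intro C hC
  obtain ⟨⟨c, hc⟩⟩ : Nonempty ↥C := hC.2.1.nonempty
  -- extract a level n with infimum above q
  obtain ⟨n, hn⟩ : ∃ n : ℕ, q < sInf {r : ℝ | ∃ K : Set V, o ∈ K ∧ K.Finite ∧
      (G.induce K).Connected ∧ n ≤ K.ncard ∧
      r = ((edgeBdry G K).ncard : ℝ) / (K.ncard : ℝ)} :=
    exists_lt_of_lt_ciSup hq
  set q' := sInf {r : ℝ | ∃ K : Set V, o ∈ K ∧ K.Finite ∧ (G.induce K).Connected ∧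
      n ≤ K.ncard ∧ r = ((edgeBdry G K).ncard : ℝ) / (K.ncard : ℝ)} with hq'def
  have hbound : ∀ K : Set V, o ∈ K → K.Finite → (G.induce K).Connected → n ≤ K.ncard →
      q' ≤ ((edgeBdry G K).ncard : ℝ) / (K.ncard : ℝ) := by
    intro K h1 h2 h3 h4
    apply csInf_le
    · refine ⟨0, fun r hr => ?_⟩
      obtain ⟨K', _, _, _, _, rfl⟩ := hr
      positivity
    · exact ⟨K, h1, h2, h3, h4, rfl⟩
  have hCfin : C.Finite := by
    by_contra hfin
    have hCinf : C.Infinite := hfin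
    obtain ⟨p⟩ := hconn.preconnected o c
    set P : Set V := {v | v ∈ p.support} with hPdef
    have hPfin : P.Finite := p.support.finite_toSet
    have hPconn : (G.induce P).Connected := p.connected_induce_support
    have hPbfin : (edgeBdry G P).Finite := edgeBdry_finite hloc hPfin
    set b : ℝ := ((edgeBdry G P).ncard : ℝ) with hbdef
    have hb0 : 0 ≤ b := Nat.cast_nonneg _
    set k : ℕ := max n (Nat.ceil (b / (q' - q)) + 1) with hkdef
    obtain ⟨W, hWcore, hWC, hcW, hWconn, hWcard⟩ := island_grow hloc hC hCinf hc k
    have hWfin : W.Finite := hWcore.1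
    set K : Set V := W ∪ P with hKdef
    have hoK : o ∈ K := Or.inr p.start_mem_support
    have hcP : c ∈ P := p.end_mem_support
    have hKfin : K.Finite := hWfin.union hPfin
    have hKconn : (G.induce K).Connected :=
      induce_union_connected hWconn.preconnected hPconn.preconnected ⟨c, hcW, hcP⟩
    have hWK : W.ncard ≤ K.ncard := Set.ncard_le_ncard Set.subset_union_left hKfin
    have hnK : n ≤ K.ncard := le_trans (le_trans (le_max_left _ _) hWcard) hWK
    have hqK := hbound K hoK hKfin hKconn hnK
    -- boundary estimate
    have hbK : (edgeBdry G K).ncard ≤ (edgeBdry G W).ncard + (edgeBdry G P).ncard := by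
      refine le_trans (Set.ncard_le_ncard edgeBdry_union_subset
        ((edgeBdry_finite hloc hWfin).union hPbfin)) (Set.ncard_union_le _ _)
    have hW0 : 0 < isolation G q W := core_pos hWcore ⟨c, hcW⟩
    have hWb : ((edgeBdry G W).ncard : ℝ) < q * W.ncard := by
      unfold isolation at hW0; linarith
    have hK0 : (0 : ℝ) < (K.ncard : ℝ) := by
      have : 0 < K.ncard := (Set.ncard_pos hKfin).mpr ⟨o, hoK⟩
      exact_mod_cast this
    have hq'K : q' * (K.ncard : ℝ) ≤ ((edgeBdry G K).ncard : ℝ) :=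
      (le_div_iff₀ hK0).mp hqK
    have hWKr : (W.ncard : ℝ) ≤ (K.ncard : ℝ) := by exact_mod_cast hWK
    have hbKr : ((edgeBdry G K).ncard : ℝ) ≤ ((edgeBdry G W).ncard : ℝ) + b := by
      rw [hbdef]; exact_mod_cast hbK
    have hqq' : 0 < q' - q := by linarith
    -- sK < b / (q' - q)
    have hsmall : (K.ncard : ℝ) < b / (q' - q) := by
      rw [lt_div_iff₀ hqq']
      nlinarith [mul_le_mul_of_nonneg_right hWKr (le_of_lt hq0)]
    have hbig : b / (q' - q) < (K.ncard : ℝ) := by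
      have h1 : b / (q' - q) ≤ (Nat.ceil (b / (q' - q)) : ℝ) := Nat.le_ceil _
      have h2 : (k : ℝ) ≤ (K.ncard : ℝ) := by
        exact_mod_cast le_trans hWcard hWK
      have h3 : (Nat.ceil (b / (q' - q)) + 1 : ℕ) ≤ k := le_max_right _ _
      have h4 : ((Nat.ceil (b / (q' - q)) + 1 : ℕ) : ℝ) ≤ (k : ℝ) := by exact_mod_cast h3
      push_cast at h4
      linarith
    linarith
  -- C is a core
  refine ⟨hCfin, ?_⟩
  have hchoice := fun v : C => island_vertex_core hloc hC v.2
  choose Sf h1 h2 h3 using hchoice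
  haveI : Fintype ↥C := hCfin.fintype
  haveI : Nonempty ↥C := ⟨⟨c, hc⟩⟩
  have hCeq : C = ⋃ v ∈ (Finset.univ : Finset ↥C), Sf v := by
    apply Set.Subset.antisymm
    · intro v hv
      exact Set.mem_biUnion (Finset.mem_univ ⟨v, hv⟩) (h3 ⟨v, hv⟩)
    · intro v hv
      obtain ⟨w, _, hw⟩ := Set.mem_iUnion₂.mp hv
      exact h2 w hw
  rw [hCeq]
  exact core_finsetBiUnion hloc Finset.univ Finset.univ_nonempty Sf fun i _ => h1 i
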